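/- The edge relation vectors E^{k,k'}_m, as m ranges over the 40 degree-5 exponent vectors with exactly two nonzero entries and as {k,k'} ranges over pairs of distinct indices outside supp(m), span a subspace of dimension exactly 80 in the ℚ-vector space V freely spanned by the 300 γ-pairs. -/
import Mathlib


/-- The indicator (standard basis) vector of `i : Fin 5`. -/
def e (i : Fin 5) : Fin 5 → ℕ := fun k => if k = i then 1 else 0

/-- The ℚ-vector space freely spanned by unordered pairs of exponent vectors;
the 300 γ-pairs sit among the basis elements. -/
abbrev V : Type := Sym2 (Fin 5 → ℕ) →₀ ℚ

/-- The basis vector `⟨{a, b}⟩` of `V` indexed by the unordered pair `{a, b}`. -/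
noncomputable def gvec (a b : Fin 5 → ℕ) : V := Finsupp.single s(a, b) 1

/-- The edge relation vector `E^{k,k'}_m` for an edge divisor `D_m`
(`supp m = {i, j}`), encoding that the two toric expressions for the ruling
class `φ_m` in the directions `k` and `k'` agree. -/
noncomputable def Evec (m : Fin 5 → ℕ) (i j k k' : Fin 5) : V :=
  gvec m (fun l => m l - e i l + e k l) + gvec m (fun l => m l - e j l + e k l)
    - gvec m (fun l => m l - e i l + e k' l)
    - gvec m (fun l => m l - e j l + e k' l)

/-- The set of the edge relation vectors `E^{k,k'}_m`, as `m` ranges over the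
40 degree-5 exponent vectors with exactly two nonzero entries and `{k, k'}`
over pairs of distinct indices outside `supp m`. -/
def RelSetE : Set V :=
  {v | ∃ (m : Fin 5 → ℕ) (i j k k' : Fin 5), (∑ l, m l) = 5 ∧
    i ≠ j ∧ Function.support m = {i, j} ∧
    k ≠ k' ∧ k ∉ ({i, j} : Set (Fin 5)) ∧ k' ∉ ({i, j} : Set (Fin 5)) ∧
    v = Evec m i j k k'}

/-- The edge relation vectors `E^{k,k'}_m` span a subspace of dimension
exactly 80. -/
/- ## Auxiliary -/

def mE (i j : Fin 5) (a : Fin 4) : Fin 5 → ℕ :=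
  fun l => if l = i then a.val + 1 else if l = j then 4 - a.val else 0

def oth (i j : Fin 5) (t : Fin 3) : Fin 5 :=
  (((List.finRange 5).filter (fun l => l != i && l != j)).getD t 0)

abbrev I80 : Type := {p : Fin 5 × Fin 5 // p.1 < p.2} × Fin 4 × Fin 2

def feq (a b : Fin 5 → ℕ) : Bool := (List.finRange 5).all (fun l => a l == b l)

lemma feq_iff {a b : Fin 5 → ℕ} : feq a b = true ↔ a = b := by
  simp [feq, funext_iff]

def ecZ (m n a b : Fin 5 → ℕ) : ℤ :=
  if (feq m a && feq n b) || (feq m b && feq n a) then 1 else 0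

def eval4Z (m : Fin 5 → ℕ) (i j k k' : Fin 5) (a b : Fin 5 → ℕ) : ℤ :=
  ecZ m (fun l => m l - e i l + e k l) a b + ecZ m (fun l => m l - e j l + e k l) a b
    - ecZ m (fun l => m l - e i l + e k' l) a b - ecZ m (fun l => m l - e j l + e k' l) a b

def pa (q : I80) : Fin 5 → ℕ := mE q.1.1.1 q.1.1.2 q.2.1

def pbig (q : I80) : Fin 5 := if q.2.1 = 0 then q.1.1.2 else q.1.1.1

def pk (q : I80) : Fin 5 := oth q.1.1.1 q.1.1.2 (if q.2.2 = 0 then 0 else 2)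

def pb (q : I80) : Fin 5 → ℕ := fun l => pa q l - e (pbig q) l + e (pk q) l

def fvZ (p q : I80) : ℤ :=
  eval4Z (mE p.1.1.1 p.1.1.2 p.2.1) p.1.1.1 p.1.1.2
    (oth p.1.1.1 p.1.1.2 p.2.2.castSucc) (oth p.1.1.1 p.1.1.2 p.2.2.succ) (pa q) (pb q)

def dvZ (q : I80) : ℤ := if q.2.2 = 0 then 1 else -1

set_option maxHeartbeats 4000000 in
set_option maxRecDepth 10000 in
lemma key : ∀ p q : I80, fvZ p q = if p = q then dvZ q else 0 := by decide

noncomputable def f80 : I80 → V :=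
  fun q => Evec (mE q.1.1.1 q.1.1.2 q.2.1) q.1.1.1 q.1.1.2
    (oth q.1.1.1 q.1.1.2 q.2.2.castSucc) (oth q.1.1.1 q.1.1.2 q.2.2.succ)

lemma gvec_apply (m n a b : Fin 5 → ℕ) :
    gvec m n s(a, b) = ((ecZ m n a b : ℤ) : ℚ) := by
  simp only [gvec, Finsupp.single_apply, ecZ, Sym2.eq_iff, Bool.or_eq_true,
    Bool.and_eq_true, feq_iff]
  split_ifs with h1 h2 h2 <;> first | rfl | simp_all | (exfalso; tauto)

lemma Evec_apply (m : Fin 5 → ℕ) (i j k k' : Fin 5) (a b : Fin 5 → ℕ) :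
    (Evec m i j k k') s(a, b) = ((eval4Z m i j k k' a b : ℤ) : ℚ) := by
  simp only [Evec, eval4Z, Finsupp.sub_apply, Finsupp.add_apply, gvec_apply]
  push_cast
  ring

lemma f80_apply (p q : I80) : (f80 p) s(pa q, pb q) = ((fvZ p q : ℤ) : ℚ) :=
  Evec_apply _ _ _ _ _ _ _

set_option maxRecDepth 4000 in
lemma indep : LinearIndependent ℚ f80 := by
  rw [Fintype.linearIndependent_iff]
  intro g hg r
  have h2 : (∑ i, g i • f80 i) s(pa r, pb r) = 0 := by rw [hg]; rfl
  rw [Finsupp.finset_sum_apply] at h2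
  simp only [Finsupp.smul_apply, f80_apply, smul_eq_mul, key,
    apply_ite (fun z : ℤ => (z : ℚ)), Int.cast_zero, mul_ite, mul_zero] at h2
  rw [Finset.sum_ite_eq' Finset.univ r] at h2
  simp only [Finset.mem_univ, if_true] at h2
  have hd : ((dvZ r : ℤ) : ℚ) ≠ 0 := by
    unfold dvZ; split <;> norm_num
  rcases mul_eq_zero.mp h2 with h | h
  · exact h
  · exact absurd h hd

lemma Evec_symm (m : Fin 5 → ℕ) (i j k k' : Fin 5) :
    Evec m i j k k' = Evec m j i k k' := by unfold Evec; abel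

lemma Evec_antisymm (m : Fin 5 → ℕ) (i j k k' : Fin 5) :
    Evec m i j k' k = - Evec m i j k k' := by unfold Evec; abel

lemma Evec_trans (m : Fin 5 → ℕ) (i j k k' k'' : Fin 5) :
    Evec m i j k k'' = Evec m i j k k' + Evec m i j k' k'' := by unfold Evec; abel

lemma oth_ne : ∀ (i j : Fin 5) (t : Fin 3), i ≠ j → oth i j t ≠ i ∧ oth i j t ≠ j := by decide

lemma oth_inj : ∀ (i j : Fin 5) (t t' : Fin 3), i ≠ j → t ≠ t' → oth i j t ≠ oth i j t' := by decide

lemma oth_covers : ∀ (i j k : Fin 5), i ≠ j → k ≠ i → k ≠ j →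
    (k = oth i j 0 ∨ k = oth i j 1 ∨ k = oth i j 2) := by decide

lemma mE_swap : ∀ (i j : Fin 5) (a : Fin 4), i ≠ j → mE i j a = mE j i (3 - a) := by decide

lemma mE_supp : ∀ (i j : Fin 5) (a : Fin 4) (l : Fin 5), i ≠ j →
    (mE i j a l ≠ 0 ↔ l = i ∨ l = j) := by decide

lemma mE_sum : ∀ (i j : Fin 5) (a : Fin 4), i ≠ j →
    mE i j a 0 + mE i j a 1 + mE i j a 2 + mE i j a 3 + mE i j a 4 = 5 := by decide

lemma cs0 : (0 : Fin 2).castSucc = (0 : Fin 3) := rfl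
lemma sc0 : (0 : Fin 2).succ = (1 : Fin 3) := rfl
lemma cs1 : (1 : Fin 2).castSucc = (1 : Fin 3) := rfl
lemma sc1 : (1 : Fin 2).succ = (2 : Fin 3) := rfl

lemma lemB (i j : Fin 5) (h : i < j) (a : Fin 4) (s s' : Fin 3) (hss' : s ≠ s') :
    Evec (mE i j a) i j (oth i j s) (oth i j s') ∈ Submodule.span ℚ (Set.range f80) := by
  have g0 : f80 ⟨⟨(i, j), h⟩, a, 0⟩ = Evec (mE i j a) i j (oth i j 0) (oth i j 1) := by
    simp only [f80, cs0, sc0]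
  have g1 : f80 ⟨⟨(i, j), h⟩, a, 1⟩ = Evec (mE i j a) i j (oth i j 1) (oth i j 2) := by
    simp only [f80, cs1, sc1]
  have m0 : Evec (mE i j a) i j (oth i j 0) (oth i j 1) ∈ Submodule.span ℚ (Set.range f80) :=
    g0 ▸ Submodule.subset_span ⟨_, rfl⟩
  have m1 : Evec (mE i j a) i j (oth i j 1) (oth i j 2) ∈ Submodule.span ℚ (Set.range f80) :=
    g1 ▸ Submodule.subset_span ⟨_, rfl⟩
  fin_cases s <;> fin_cases s' <;> simp_all <;>
    first
    | exact m0
    | exact m1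
    | (rw [Evec_antisymm]; exact Submodule.neg_mem _ m0)
    | (rw [Evec_antisymm]; exact Submodule.neg_mem _ m1)
    | (rw [Evec_trans (mE i j a) i j _ (oth i j 1) _]; exact Submodule.add_mem _ m0 m1)
    | (rw [Evec_antisymm, Evec_trans (mE i j a) i j _ (oth i j 1) _];
       exact Submodule.neg_mem _ (Submodule.add_mem _ m0 m1))

lemma lemA (i j : Fin 5) (a : Fin 4) (k k' : Fin 5) (hij : i ≠ j)
    (hki : k ≠ i) (hkj : k ≠ j) (hk'i : k' ≠ i) (hk'j : k' ≠ j) (hkk' : k ≠ k') :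
    Evec (mE i j a) i j k k' ∈ Submodule.span ℚ (Set.range f80) := by
  have main : ∀ (i j : Fin 5) (h : i < j) (a : Fin 4) (k k' : Fin 5),
      k ≠ i → k ≠ j → k' ≠ i → k' ≠ j → k ≠ k' →
      Evec (mE i j a) i j k k' ∈ Submodule.span ℚ (Set.range f80) := by
    intro i j h a k k' hki hkj hk'i hk'j hkk'
    have hij := ne_of_lt h
    rcases oth_covers i j k hij hki hkj with hk | hk | hk <;>
      rcases oth_covers i j k' hij hk'i hk'j with hk' | hk' | hk' <;>
      subst hk <;> subst hk' <;>
      first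
      | exact absurd rfl hkk'
      | exact lemB i j h a _ _ (by decide)
  rcases lt_or_gt_of_ne hij with h | h
  · exact main i j h a k k' hki hkj hk'i hk'j hkk'
  · rw [mE_swap i j a hij, Evec_symm]
    exact main j i h (3 - a) k k' hkj hki hk'j hk'i hkk'

lemma f80_mem (q : I80) : f80 q ∈ RelSetE := by
  obtain ⟨⟨⟨i, j⟩, hij⟩, a, t⟩ := q
  have hij' : i ≠ j := ne_of_lt hij
  refine ⟨mE i j a, i, j, oth i j t.castSucc, oth i j t.succ, ?_, hij', ?_, ?_, ?_, ?_, rfl⟩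
  · rw [Fin.sum_univ_five]; exact mE_sum i j a hij'
  · ext l
    simp only [Function.mem_support, Set.mem_insert_iff, Set.mem_singleton_iff]
    exact mE_supp i j a l hij'
  · exact oth_inj i j _ _ hij' (by
      revert t; decide)
  · simp only [Set.mem_insert_iff, Set.mem_singleton_iff]
    push_neg
    exact oth_ne i j _ hij'
  · simp only [Set.mem_insert_iff, Set.mem_singleton_iff]
    push_neg
    exact oth_ne i j _ hij'

lemma relset_sub : RelSetE ⊆ (Submodule.span ℚ (Set.range f80) : Submodule ℚ V) := by
  rintro v ⟨m, i, j, k, k', hsum, hij, hsupp, hkk', hk, hk', rfl⟩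
  simp only [Set.mem_insert_iff, Set.mem_singleton_iff] at hk hk'
  push_neg at hk hk'
  have hml : ∀ l, l ≠ i → l ≠ j → m l = 0 := by
    intro l h1 h2
    by_contra h
    have hl : l ∈ Function.support m := h
    rw [hsupp] at hl
    rcases hl with h' | h'
    · exact h1 h'
    · exact h2 h'
  have hmi : m i ≠ 0 := by
    have : i ∈ Function.support m := by rw [hsupp]; exact Set.mem_insert _ _
    exact this
  have hmj : m j ≠ 0 := by
    have : j ∈ Function.support m := by
      rw [hsupp]; exact Set.mem_insert_iff.mpr (Or.inr rfl)
    exact this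
  have hsum2 : m i + m j = 5 := by
    have hz : ∀ x ∈ Finset.univ, x ∉ ({i, j} : Finset (Fin 5)) → m x = 0 := by
      intro x _ hx
      rw [Finset.mem_insert, Finset.mem_singleton] at hx
      push_neg at hx
      exact hml x hx.1 hx.2
    have := (Finset.sum_subset (Finset.subset_univ ({i, j} : Finset (Fin 5))) hz).symm
    rw [hsum] at this
    rw [← Finset.sum_pair hij]
    exact this.symm
  have hmeq : m = mE i j ⟨m i - 1, by omega⟩ := by
    funext l
    simp only [mE]
    split_ifs with h1 h2
    · subst h1; exact (by omega : m l = m l - 1 + 1)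
    · subst h2; exact (by omega : m l = 4 - (m i - 1))
    · exact hml l h1 h2
  rw [hmeq]
  exact lemA i j _ k k' hij hk.1 hk.2 hk'.1 hk'.2 hkk'


theorem rank_of_edge_relations :
    Module.finrank ℚ (Submodule.span ℚ RelSetE) = 80 := by
  have h1 : Submodule.span ℚ RelSetE = Submodule.span ℚ (Set.range f80) := by
    apply le_antisymm
    · exact Submodule.span_le.mpr relset_sub
    · refine Submodule.span_le.mpr ?_
      rintro v ⟨q, rfl⟩
      exact Submodule.subset_span (f80_mem q)
  rw [h1, finrank_span_eq_card indep]
  decide
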